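/- For differentiable functions x₁,...,x_N with x₁ a root of multiplicity m₁+1 of p(z;t)=(z−x₁)^{m₁}∏_{n=1}^N(z−x_n), the following compatibility identity holds: Σ_{j=1}^N x₁^{N−j} ξ̇_j = Σ_{j=1}^N [(N−j+1)_{m₁}/(m₁+1)!] x₁^{N−j} ẏ_j, where ξ_j are the coefficients of ∏_{n=1}^N(z−x_n), y_j the first N coefficients of p, and (α)_m the Pochhammer symbol. -/

import Mathlib

open Finset Polynomial

/-- Differentiability of coefficient functions of products of linear factors. -/
private lemma diff_coeff {ι : Type*} [DecidableEq ι] (S : Finset ι) (f : ι → ℝ → ℂ)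
    (hf : ∀ i, Differentiable ℝ (f i)) :
    ∀ (k : ℕ) (t : ℝ),
      DifferentiableAt ℝ (fun s => (∏ i ∈ S, (X - C (f i s))).coeff k) t := by
  induction S using Finset.induction_on with
  | empty =>
      intro k t
      simp only [Finset.prod_empty, Polynomial.coeff_one]
      exact differentiableAt_const _
  | @insert a S ha ih =>
      intro k t
      cases k with
      | zero =>
          have hrw : (fun s => (∏ i ∈ insert a S, (X - C (f i s))).coeff 0)
              = fun s => (-(f a s)) * (∏ i ∈ S, (X - C (f i s))).coeff 0 := by
            funext s
            rw [Finset.prod_insert ha, Polynomial.mul_coeff_zero]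
            simp
          rw [hrw]
          exact ((hf a t).neg).mul (ih 0 t)
      | succ k =>
          have hrw : (fun s => (∏ i ∈ insert a S, (X - C (f i s))).coeff (k + 1))
              = fun s => (∏ i ∈ S, (X - C (f i s))).coeff k
                  - (f a s) * (∏ i ∈ S, (X - C (f i s))).coeff (k + 1) := by
            funext s
            rw [Finset.prod_insert ha, sub_mul, coeff_sub, coeff_X_mul, coeff_C_mul]
          rw [hrw]
          exact (ih k t).sub ((hf a t).mul (ih (k + 1) t))

/-- Differentiability of evaluated iterated derivatives of products of linear factors. -/
private lemma diff_evalDeriv {ι : Type*} [DecidableEq ι] (S : Finset ι) (f : ι → ℝ → ℂ)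
    (hf : ∀ i, Differentiable ℝ (f i)) (k : ℕ) (a : ℂ) (t : ℝ) :
    DifferentiableAt ℝ
      (fun s => (Polynomial.derivative^[k] (∏ i ∈ S, (X - C (f i s)))).eval a) t := by
  have hdeg : ∀ s : ℝ,
      (Polynomial.derivative^[k] (∏ i ∈ S, (X - C (f i s)))).natDegree < S.card + 1 := by
    intro s
    have h1 : (∏ i ∈ S, (X - C (f i s))).natDegree = S.card := by
      rw [natDegree_prod_of_monic _ _ (fun i _ => monic_X_sub_C _)]
      simp [natDegree_X_sub_C]
    have h2 := Polynomial.natDegree_iterate_derivative (∏ i ∈ S, (X - C (f i s))) k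
    omega
  have hrw : (fun s => (Polynomial.derivative^[k] (∏ i ∈ S, (X - C (f i s)))).eval a)
      = fun s => ∑ n ∈ Finset.range (S.card + 1),
          (((n + k).descFactorial k : ℂ) * (∏ i ∈ S, (X - C (f i s))).coeff (n + k)) * a ^ n := by
    funext s
    rw [Polynomial.eval_eq_sum_range' (hdeg s)]
    refine Finset.sum_congr rfl fun n _ => ?_
    rw [Polynomial.coeff_iterate_derivative, nsmul_eq_mul]
  rw [hrw]
  refine DifferentiableAt.fun_sum fun n _ => ?_
  exact ((differentiableAt_const _).mul (diff_coeff S f hf (n + k) t)).mul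
    (differentiableAt_const _)

private lemma hasDerivAt_fun_pow {f : ℝ → ℂ} {f' : ℂ} {t : ℝ}
    (hf : HasDerivAt f f' t) (n : ℕ) :
    HasDerivAt (fun s => f s ^ n) ((n : ℂ) * f t ^ (n - 1) * f') t := by
  induction n with
  | zero => simpa using hasDerivAt_const t (1 : ℂ)
  | succ m ih =>
      rcases Nat.eq_zero_or_pos m with hm0 | hm0
      · subst hm0
        simpa using hf
      · have h2 : HasDerivAt (fun s => f s ^ m * f s) _ t := ih.mul hf
        have hfe : (fun s => f s ^ m * f s) = fun s => f s ^ (m + 1) := by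
          funext s; rw [pow_succ]
        rw [hfe] at h2
        have hpow : f t ^ (m - 1) * f t = f t ^ m := by
          rw [← pow_succ, Nat.sub_add_cancel hm0]
        convert h2 using 1
        rw [show m + 1 - 1 = m from rfl]
        push_cast
        calc ((m : ℂ) + 1) * f t ^ m * f'
            = (m : ℂ) * (f t ^ (m - 1) * f t) * f' + f t ^ m * f' := by rw [hpow]; ring
          _ = (m : ℂ) * f t ^ (m - 1) * f' * f t + f t ^ m * f' := by ring

theorem first_order_compatibility_identity
    (N m₁ : ℕ) (hN : 2 ≤ N) (hm : 1 ≤ m₁)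
    (x : Fin N → ℝ → ℂ)
    (hdiff : ∀ n, Differentiable ℝ (x n))
    (hdist : ∀ t, Function.Injective fun n => x n t)
    (ξ y : ℕ → ℝ → ℂ)
    (hξ : ∀ j t, ξ j t = (∏ i : Fin N, (X - C (x i t))).coeff (N - j))
    (hy : ∀ j t, y j t
      = ((X - C (x ⟨0, by omega⟩ t)) ^ m₁ * ∏ i : Fin N, (X - C (x i t))).coeff
          (N + m₁ - j)) :
    ∀ t,
      ∑ j ∈ Finset.Icc 1 N, (x ⟨0, by omega⟩ t) ^ (N - j) * deriv (ξ j) t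
        = ∑ j ∈ Finset.Icc 1 N,
            ((ascPochhammer ℂ m₁).eval ((N : ℂ) - (j : ℂ) + 1) / ((m₁ + 1).factorial : ℂ)) *
              (x ⟨0, by omega⟩ t) ^ (N - j) * deriv (y j) t := by
  intro t
  set i0 : Fin N := ⟨0, by omega⟩ with hi0
  set a : ℂ := x i0 t with hadef
  set u' : ℂ := deriv (x i0) t with hu'
  set g : ℝ → ℂ := fun s => ∏ i ∈ Finset.univ.erase i0, (a - x i s) with hgdef
  set R : ℝ → ℂ[X] := fun s => ∏ i ∈ Finset.univ.erase i0, (X - C (x i s)) with hRdef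
  set E : ℝ → ℂ := fun s =>
    (Polynomial.derivative^[m₁]
      ((X - C (x i0 s)) ^ m₁ * ∏ i : Fin N, (X - C (x i s)))).eval a with hEdef
  have haz : a - x i0 t = 0 := by rw [hadef]; exact sub_self _
  -- degree facts for Q
  have hQmonic : ∀ s : ℝ, (∏ i : Fin N, (X - C (x i s))).Monic :=
    fun s => monic_prod_of_monic _ _ (fun i _ => monic_X_sub_C _)
  have hQdeg : ∀ s : ℝ, (∏ i : Fin N, (X - C (x i s))).natDegree = N := by
    intro s
    rw [natDegree_prod_of_monic _ _ (fun i _ => monic_X_sub_C _)]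
    simp [natDegree_X_sub_C]
  have hgd : DifferentiableAt ℝ g t := by
    have : g = fun s =>
        (Polynomial.derivative^[0] (∏ i ∈ Finset.univ.erase i0, (X - C (x i s)))).eval a := by
      funext s
      simp [hgdef, eval_prod]
    rw [this]
    exact diff_evalDeriv _ x hdiff 0 a t
  ----------------------------------------------------------------
  -- LHS
  ----------------------------------------------------------------
  have hξd : ∀ j : ℕ, DifferentiableAt ℝ (ξ j) t := by
    intro j
    have : ξ j = fun s => (∏ i : Fin N, (X - C (x i s))).coeff (N - j) := funext (hξ j)
    rw [this]
    exact diff_coeff Finset.univ x hdiff (N - j) t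
  have hL1 : ∀ s : ℝ, ∑ j ∈ Finset.Icc 1 N, a ^ (N - j) * ξ j s
      = (∏ i : Fin N, (a - x i s)) - a ^ N := by
    intro s
    have heval : (∏ i : Fin N, (X - C (x i s))).eval a = ∏ i : Fin N, (a - x i s) := by
      simp [eval_prod]
    have hlt : (∏ i : Fin N, (X - C (x i s))).natDegree < N + 1 := by rw [hQdeg s]; omega
    have hsum := Polynomial.eval_eq_sum_range' hlt a
    rw [heval] at hsum
    have hcoeffN : (∏ i : Fin N, (X - C (x i s))).coeff N = 1 := by
      have := (hQmonic s).coeff_natDegree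
      rwa [hQdeg s] at this
    rw [Finset.sum_range_succ, hcoeffN, one_mul] at hsum
    have hbij : ∑ j ∈ Finset.Icc 1 N, a ^ (N - j) * ξ j s
        = ∑ k ∈ Finset.range N, (∏ i : Fin N, (X - C (x i s))).coeff k * a ^ k := by
      refine Finset.sum_nbij' (fun j => N - j) (fun k => N - k) ?_ ?_ ?_ ?_ ?_
      · intro j hj; simp only [Finset.mem_Icc] at hj; simp only [Finset.mem_range]; omega
      · intro k hk; simp only [Finset.mem_range] at hk; simp only [Finset.mem_Icc]; omega
      · intro j hj; simp only [Finset.mem_Icc] at hj; show N - (N - j) = j; omega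
      · intro k hk; simp only [Finset.mem_range] at hk; show N - (N - k) = k; omega
      · intro j hj
        rw [hξ j s, mul_comm]
    rw [hbij, hsum]
    ring
  have hsplit : ∀ s : ℝ, (∏ i : Fin N, (a - x i s)) = (a - x i0 s) * g s :=
    fun s => (Finset.mul_prod_erase Finset.univ _ (Finset.mem_univ i0)).symm
  have hLHS : ∑ j ∈ Finset.Icc 1 N, a ^ (N - j) * deriv (ξ j) t = -(u' * g t) := by
    have h1 : ∑ j ∈ Finset.Icc 1 N, a ^ (N - j) * deriv (ξ j) t
        = deriv (fun s => ∑ j ∈ Finset.Icc 1 N, a ^ (N - j) * ξ j s) t := by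
      rw [deriv_fun_sum (fun j _ => (hξd j).const_mul _)]
      exact Finset.sum_congr rfl fun j _ => (deriv_const_mul _ (hξd j)).symm
    have h2 : (fun s => ∑ j ∈ Finset.Icc 1 N, a ^ (N - j) * ξ j s)
        = fun s => (a - x i0 s) * g s - a ^ N := by
      funext s
      rw [hL1 s, hsplit s]
    have hu : HasDerivAt (fun s => a - x i0 s) (-u') t :=
      ((hdiff i0 t).hasDerivAt).const_sub a
    have hmul : HasDerivAt (fun s => (a - x i0 s) * g s)
        ((-u') * g t + (a - x i0 t) * deriv g t) t := hu.mul hgd.hasDerivAt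
    have hfin := (hmul.sub_const (a ^ N)).deriv
    rw [h1, h2, hfin, haz]
    ring
  ----------------------------------------------------------------
  -- RHS
  ----------------------------------------------------------------
  have hyd : ∀ j : ℕ, DifferentiableAt ℝ (y j) t := by
    intro j
    have hyrw : y j = fun s =>
        (∏ i : Fin m₁ ⊕ Fin N,
          (X - C (Sum.elim (fun _ : Fin m₁ => x i0) x i s))).coeff (N + m₁ - j) := by
      funext s
      rw [hy j s]
      congr 1
      rw [Fintype.prod_sum_type]
      simp [Finset.prod_const, Finset.card_univ]
    rw [hyrw]
    refine diff_coeff Finset.univ _ ?_ (N + m₁ - j) t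
    rintro (i | i)
    · exact hdiff i0
    · exact hdiff i
  have hPmonic : ∀ s : ℝ,
      ((X - C (x i0 s)) ^ m₁ * ∏ i : Fin N, (X - C (x i s))).Monic :=
    fun s => ((monic_X_sub_C _).pow m₁).mul (hQmonic s)
  have hPdeg : ∀ s : ℝ,
      ((X - C (x i0 s)) ^ m₁ * ∏ i : Fin N, (X - C (x i s))).natDegree = N + m₁ := by
    intro s
    rw [Polynomial.Monic.natDegree_mul ((monic_X_sub_C _).pow m₁) (hQmonic s),
      natDegree_pow, natDegree_X_sub_C, hQdeg s]
    ring
  have hPsplit : ∀ s : ℝ, (X - C (x i0 s)) ^ m₁ * ∏ i : Fin N, (X - C (x i s))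
      = (X - C (x i0 s)) ^ (m₁ + 1) * R s := by
    intro s
    rw [show (∏ i : Fin N, (X - C (x i s))) = (X - C (x i0 s)) * R s from
      (Finset.mul_prod_erase _ _ (Finset.mem_univ i0)).symm]
    ring
  have hR1 : ∀ s : ℝ,
      ∑ j ∈ Finset.Icc 1 N, ((N - j + m₁).descFactorial m₁ : ℂ) * a ^ (N - j) * y j s
        = E s - ((N + m₁).descFactorial m₁ : ℂ) * a ^ N := by
    intro s
    have hlt : (Polynomial.derivative^[m₁]
        ((X - C (x i0 s)) ^ m₁ * ∏ i : Fin N, (X - C (x i s)))).natDegree < N + 1 := by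
      have := Polynomial.natDegree_iterate_derivative
        ((X - C (x i0 s)) ^ m₁ * ∏ i : Fin N, (X - C (x i s))) m₁
      rw [hPdeg s] at this
      omega
    have hsum : E s = ∑ n ∈ Finset.range (N + 1),
        ((n + m₁).descFactorial m₁ : ℂ)
          * ((X - C (x i0 s)) ^ m₁ * ∏ i : Fin N, (X - C (x i s))).coeff (n + m₁) * a ^ n := by
      simp only [hEdef]
      rw [Polynomial.eval_eq_sum_range' hlt a]
      refine Finset.sum_congr rfl fun n _ => ?_
      rw [Polynomial.coeff_iterate_derivative, nsmul_eq_mul]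
    have hcoefftop :
        ((X - C (x i0 s)) ^ m₁ * ∏ i : Fin N, (X - C (x i s))).coeff (N + m₁) = 1 := by
      have := (hPmonic s).coeff_natDegree
      rwa [hPdeg s] at this
    have hbij : ∑ j ∈ Finset.Icc 1 N,
          ((N - j + m₁).descFactorial m₁ : ℂ) * a ^ (N - j) * y j s
        = ∑ n ∈ Finset.range N, ((n + m₁).descFactorial m₁ : ℂ)
            * ((X - C (x i0 s)) ^ m₁ * ∏ i : Fin N, (X - C (x i s))).coeff (n + m₁) * a ^ n := by
      refine Finset.sum_nbij' (fun j => N - j) (fun k => N - k) ?_ ?_ ?_ ?_ ?_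
      · intro j hj; simp only [Finset.mem_Icc] at hj; simp only [Finset.mem_range]; omega
      · intro k hk; simp only [Finset.mem_range] at hk; simp only [Finset.mem_Icc]; omega
      · intro j hj; simp only [Finset.mem_Icc] at hj; show N - (N - j) = j; omega
      · intro k hk; simp only [Finset.mem_range] at hk; show N - (N - k) = k; omega
      · intro j hj
        simp only [Finset.mem_Icc] at hj
        rw [hy j s, show N + m₁ - j = N - j + m₁ by omega]
        ring
    rw [hbij, hsum, Finset.sum_range_succ, hcoefftop]
    ring
  have hasc : ∀ j ∈ Finset.Icc 1 N,
      (ascPochhammer ℂ m₁).eval ((N : ℂ) - (j : ℂ) + 1)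
        = ((N - j + m₁).descFactorial m₁ : ℂ) := by
    intro j hj
    simp only [Finset.mem_Icc] at hj
    have hcast : ((N : ℂ) - (j : ℂ) + 1) = ((N - j + 1 : ℕ) : ℂ) := by
      push_cast [Nat.cast_sub hj.2]
      ring
    rw [hcast, ← ascPochhammer_eval_cast, ascPochhammer_nat_eq_descFactorial]
    congr 2
    omega
  -- derivative of E
  have hDk : ∀ k : ℕ,
      DifferentiableAt ℝ (fun s => (Polynomial.derivative^[k] (R s)).eval a) t := by
    intro k
    simp only [hRdef]
    exact diff_evalDeriv _ x hdiff k a t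
  have hEform : ∀ s : ℝ, E s = ∑ k ∈ Finset.range (m₁ + 1),
      ((m₁.choose k * (m₁ + 1).descFactorial (m₁ - k) : ℕ) : ℂ)
        * ((a - x i0 s) ^ (k + 1) * (Polynomial.derivative^[k] (R s)).eval a) := by
    intro s
    simp only [hEdef]
    rw [hPsplit s, Polynomial.iterate_derivative_mul, Polynomial.eval_finset_sum]
    refine Finset.sum_congr rfl fun k hk => ?_
    rw [Polynomial.iterate_derivative_X_sub_pow,
      show m₁ + 1 - (m₁ - k) = k + 1 by
        have := Finset.mem_range.mp hk; omega]
    simp only [smul_mul_assoc, nsmul_eq_mul, eval_mul, eval_natCast, eval_pow, eval_sub,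
      eval_X, eval_C]
    push_cast
    ring
  have hderivE : deriv E t = ((m₁ + 1).factorial : ℂ) * (-(u' * g t)) := by
    have hE2 : E = fun s => ∑ k ∈ Finset.range (m₁ + 1),
        ((m₁.choose k * (m₁ + 1).descFactorial (m₁ - k) : ℕ) : ℂ)
          * ((a - x i0 s) ^ (k + 1) * (Polynomial.derivative^[k] (R s)).eval a) :=
      funext hEform
    have hinner : ∀ k : ℕ, DifferentiableAt ℝ
        (fun s => (a - x i0 s) ^ (k + 1) * (Polynomial.derivative^[k] (R s)).eval a) t :=
      fun k => ((hasDerivAt_fun_pow (((hdiff i0 t).hasDerivAt).const_sub a)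
        (k + 1)).differentiableAt).mul (hDk k)
    rw [hE2, deriv_fun_sum (fun k _ => (hinner k).const_mul _),
      Finset.sum_congr rfl (fun k _ => deriv_const_mul _ (hinner k))]
    have hterm : ∀ k ∈ Finset.range (m₁ + 1),
        ((m₁.choose k * (m₁ + 1).descFactorial (m₁ - k) : ℕ) : ℂ)
          * deriv (fun s => (a - x i0 s) ^ (k + 1)
              * (Polynomial.derivative^[k] (R s)).eval a) t
        = if k = 0 then ((m₁ + 1).factorial : ℂ) * (-(u' * g t)) else 0 := by
      intro k hk
      have hpow : HasDerivAt (fun s => (a - x i0 s) ^ (k + 1))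
          (((k + 1 : ℕ) : ℂ) * (a - x i0 t) ^ (k + 1 - 1) * (-u')) t :=
        hasDerivAt_fun_pow (((hdiff i0 t).hasDerivAt).const_sub a) (k + 1)
      have hmul := (HasDerivAt.deriv (f := fun s => (a - x i0 s) ^ (k + 1)
          * (Polynomial.derivative^[k] (R s)).eval a) (hpow.mul (hDk k).hasDerivAt))
      rw [hmul]
      rcases Nat.eq_zero_or_pos k with hk0 | hk0
      · subst hk0
        simp only [if_pos rfl]
        have hD0 : (Polynomial.derivative^[0] (R t)).eval a = g t := by
          simp [hRdef, hgdef, eval_prod]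
        rw [hD0, haz]
        have hdesc : (m₁ + 1).descFactorial (m₁ - 0) = (m₁ + 1).factorial := by
          rw [Nat.sub_zero, Nat.descFactorial_eq_factorial_mul_choose,
            Nat.choose_succ_self_right, Nat.factorial_succ]
          ring
        rw [hdesc]
        simp
      · rw [if_neg (by omega)]
        rw [haz, zero_pow (by omega : k + 1 - 1 ≠ 0), zero_pow (by omega : k + 1 ≠ 0)]
        ring
    rw [Finset.sum_congr rfl hterm, Finset.sum_ite_eq' (Finset.range (m₁ + 1)) 0,
      if_pos (Finset.mem_range.mpr (by omega))]
  have hfact_ne : ((m₁ + 1).factorial : ℂ) ≠ 0 :=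
    Nat.cast_ne_zero.mpr (Nat.factorial_ne_zero _)
  have hRHS : ∑ j ∈ Finset.Icc 1 N,
        ((ascPochhammer ℂ m₁).eval ((N : ℂ) - (j : ℂ) + 1) / ((m₁ + 1).factorial : ℂ))
          * a ^ (N - j) * deriv (y j) t
      = -(u' * g t) := by
    have h1 : ∑ j ∈ Finset.Icc 1 N,
          ((ascPochhammer ℂ m₁).eval ((N : ℂ) - (j : ℂ) + 1) / ((m₁ + 1).factorial : ℂ))
            * a ^ (N - j) * deriv (y j) t
        = (∑ j ∈ Finset.Icc 1 N,
            ((N - j + m₁).descFactorial m₁ : ℂ) * a ^ (N - j) * deriv (y j) t)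
          / ((m₁ + 1).factorial : ℂ) := by
      rw [Finset.sum_div]
      refine Finset.sum_congr rfl fun j hj => ?_
      rw [hasc j hj]
      ring
    have h2 : ∑ j ∈ Finset.Icc 1 N,
          ((N - j + m₁).descFactorial m₁ : ℂ) * a ^ (N - j) * deriv (y j) t
        = deriv (fun s => ∑ j ∈ Finset.Icc 1 N,
            ((N - j + m₁).descFactorial m₁ : ℂ) * a ^ (N - j) * y j s) t := by
      rw [deriv_fun_sum (fun j _ => (hyd j).const_mul _)]
      exact Finset.sum_congr rfl fun j _ => (deriv_const_mul _ (hyd j)).symm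
    have h3 : (fun s => ∑ j ∈ Finset.Icc 1 N,
          ((N - j + m₁).descFactorial m₁ : ℂ) * a ^ (N - j) * y j s)
        = fun s => E s - ((N + m₁).descFactorial m₁ : ℂ) * a ^ N := funext hR1
    have hEd : DifferentiableAt ℝ E t := by
      rw [funext hEform]
      exact DifferentiableAt.fun_sum fun k _ =>
        (((hasDerivAt_fun_pow (((hdiff i0 t).hasDerivAt).const_sub a)
          (k + 1)).differentiableAt).mul (hDk k)).const_mul _
    have h4 : deriv (fun s => E s - ((N + m₁).descFactorial m₁ : ℂ) * a ^ N) t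
        = deriv E t := deriv_sub_const _
    rw [h1, h2, h3, h4, hderivE]
    field_simp
  rw [hLHS, hRHS]
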